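/- Let U ⊆ ℝ be an open set with r³ ≠ -2 for all r ∈ U, let φ(r) = 12^{2/3}·r/(2(r³+2)) and ψ(r) = 2·12^{1/3}·r²/(r³+2), and suppose the derivative φ'(r) ≠ 0 for every r ∈ U. Let H : ℝ → ℝ be six times differentiable on an open set V ⊆ ℝ containing φ(U), and suppose H(φ(r)) = ψ(r) for all r ∈ U. Then H satisfies Noth's equation at every point of φ(U): for all t ∈ φ(U), 10·(H''(t))³·H⁽⁶⁾(t) − 70·(H''(t))²·H⁽³⁾(t)·H⁽⁵⁾(t) − 49·(H''(t))²·(H⁽⁴⁾(t))² + 280·H''(t)·(H⁽³⁾(t))²·H⁽⁴⁾(t) − 175·(H⁽³⁾(t))⁴ = 0. -/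

import Mathlib

/-- Noth's equation at a point `t` for a function `H`, expressed via iterated derivatives. -/
def NothEqAt (H : ℝ → ℝ) (t : ℝ) : Prop :=
  10 * (iteratedDeriv 2 H t) ^ 3 * iteratedDeriv 6 H t
    - 70 * (iteratedDeriv 2 H t) ^ 2 * iteratedDeriv 3 H t * iteratedDeriv 5 H t
    - 49 * (iteratedDeriv 2 H t) ^ 2 * (iteratedDeriv 4 H t) ^ 2
    + 280 * iteratedDeriv 2 H t * (iteratedDeriv 3 H t) ^ 2 * iteratedDeriv 4 H t
    - 175 * (iteratedDeriv 3 H t) ^ 4 = 0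

noncomputable def aC : ℝ := (12 : ℝ) ^ ((1 : ℝ)/3)

lemma aC_def : aC = (12 : ℝ) ^ ((1 : ℝ)/3) := rfl

lemma aC_cube : aC ^ 3 = 12 := by
  rw [aC_def, ← Real.rpow_natCast ((12:ℝ) ^ ((1:ℝ)/3)) 3, ← Real.rpow_mul (by norm_num)]
  norm_num

lemma aC_sq : (12 : ℝ) ^ ((2 : ℝ)/3) = aC ^ 2 := by
  rw [aC_def, ← Real.rpow_natCast ((12:ℝ) ^ ((1:ℝ)/3)) 2, ← Real.rpow_mul (by norm_num)]
  norm_num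

lemma myCongr {f : ℝ → ℝ} {f' g' x : ℝ} (h : HasDerivAt f f' x) (e : f' = g') :
    HasDerivAt f g' x := e ▸ h

noncomputable def fdP : ℝ → ℝ := fun x => (2 - 2 * x ^ 3) / ((x ^ 3 + 2) ^ 2)

noncomputable def B0 : ℝ → ℝ := fun x => x ^ 2 / (x ^ 3 + 2)

noncomputable def B1 : ℝ → ℝ := fun x => (1 * x ^ 4 + (-4) * x ^ 1) / (2 * (x ^ 3 - 1))

noncomputable def B2 : ℝ → ℝ := fun x => ((-1) * x ^ 12 + (-8) * x ^ 9 + (-24) * x ^ 6 + (-32) * x ^ 3 + (-16)) / (4 * (x ^ 3 - 1) ^ 3)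

noncomputable def B3 : ℝ → ℝ := fun x => (3 * x ^ 20 + (-180) * x ^ 14 + (-960) * x ^ 11 + (-2160) * x ^ 8 + (-2304) * x ^ 5 + (-960) * x ^ 2) / (8 * (x ^ 3 - 1) ^ 5)

noncomputable def B4 : ℝ → ℝ := fun x => ((-15) * x ^ 28 + (-6840) * x ^ 19 + (-51840) * x ^ 16 + (-168480) * x ^ 13 + (-288000) * x ^ 10 + (-259200) * x ^ 7 + (-103680) * x ^ 4 + (-7680) * x ^ 1) / (16 * (x ^ 3 - 1) ^ 7)

noncomputable def B5 : ℝ → ℝ := fun x => (105 * x ^ 36 + (-1260) * x ^ 30 + (-15360) * x ^ 27 + (-443880) * x ^ 24 + (-3788640) * x ^ 21 + (-15624000) * x ^ 18 + (-36650880) * x ^ 15 + (-51045120) * x ^ 12 + (-40911360) * x ^ 9 + (-16588800) * x ^ 6 + (-2304000) * x ^ 3 + (-30720)) / (32 * (x ^ 3 - 1) ^ 9)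

noncomputable def B6 : ℝ → ℝ := fun x => ((-945) * x ^ 44 + 15120 * x ^ 38 + (-7560) * x ^ 35 + (-1882440) * x ^ 32 + (-40521600) * x ^ 29 + (-360702720) * x ^ 26 + (-1735292160) * x ^ 23 + (-5080320000) * x ^ 20 + (-9494876160) * x ^ 17 + (-11374110720) * x ^ 14 + (-8416880640) * x ^ 11 + (-3493324800) * x ^ 8 + (-650280960) * x ^ 5 + (-30965760) * x ^ 2) / (64 * (x ^ 3 - 1) ^ 11)

lemma Bstep0 (r : ℝ) (h1 : r ^ 3 - 1 ≠ 0) (h2 : r ^ 3 + 2 ≠ 0) :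
    HasDerivAt B0 (fdP r * B1 r) r := by
  have h := (hasDerivAt_pow 2 r).div ((hasDerivAt_pow 3 r).add_const (2 : ℝ)) h2
  exact myCongr h (by simp only [fdP, B1]; push_cast; field_simp; ring)

lemma Bstep1 (r : ℝ) (h1 : r ^ 3 - 1 ≠ 0) (h2 : r ^ 3 + 2 ≠ 0) :
    HasDerivAt B1 (fdP r * B2 r) r := by
  have h := (((hasDerivAt_pow 4 r).const_mul (1 : ℝ)).add ((hasDerivAt_pow 1 r).const_mul ((-4) : ℝ))).div
    (((hasDerivAt_pow 3 r).sub_const (1 : ℝ)).const_mul (2 : ℝ)) (mul_ne_zero two_ne_zero h1)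
  exact myCongr h (by simp only [fdP, B2]; push_cast; simp only [Pi.add_apply, Pi.pow_apply, id_eq]; field_simp; ring)

lemma Bstep2 (r : ℝ) (h1 : r ^ 3 - 1 ≠ 0) (h2 : r ^ 3 + 2 ≠ 0) :
    HasDerivAt B2 (fdP r * B3 r) r := by
  have h := (((((((hasDerivAt_pow 12 r).const_mul (-1 : ℝ)).add ((hasDerivAt_pow 9 r).const_mul (-8 : ℝ))).add ((hasDerivAt_pow 6 r).const_mul (-24 : ℝ))).add ((hasDerivAt_pow 3 r).const_mul (-32 : ℝ))).add_const (-16 : ℝ))).div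
    ((((hasDerivAt_pow 3 r).sub_const (1 : ℝ)).pow 3).const_mul (4 : ℝ))
    (mul_ne_zero (by norm_num) (pow_ne_zero _ h1))
  exact myCongr h (by simp only [fdP, B3]; push_cast; simp only [Pi.add_apply, Pi.pow_apply, id_eq]; field_simp; ring)

lemma Bstep3 (r : ℝ) (h1 : r ^ 3 - 1 ≠ 0) (h2 : r ^ 3 + 2 ≠ 0) :
    HasDerivAt B3 (fdP r * B4 r) r := by
  have h := ((((((((hasDerivAt_pow 20 r).const_mul (3 : ℝ)).add ((hasDerivAt_pow 14 r).const_mul (-180 : ℝ))).add ((hasDerivAt_pow 11 r).const_mul (-960 : ℝ))).add ((hasDerivAt_pow 8 r).const_mul (-2160 : ℝ))).add ((hasDerivAt_pow 5 r).const_mul (-2304 : ℝ))).add ((hasDerivAt_pow 2 r).const_mul (-960 : ℝ)))).div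
    ((((hasDerivAt_pow 3 r).sub_const (1 : ℝ)).pow 5).const_mul (8 : ℝ))
    (mul_ne_zero (by norm_num) (pow_ne_zero _ h1))
  exact myCongr h (by simp only [fdP, B4]; push_cast; simp only [Pi.add_apply, Pi.pow_apply, id_eq]; field_simp; ring)

lemma Bstep4 (r : ℝ) (h1 : r ^ 3 - 1 ≠ 0) (h2 : r ^ 3 + 2 ≠ 0) :
    HasDerivAt B4 (fdP r * B5 r) r := by
  have h := ((((((((((hasDerivAt_pow 28 r).const_mul (-15 : ℝ)).add ((hasDerivAt_pow 19 r).const_mul (-6840 : ℝ))).add ((hasDerivAt_pow 16 r).const_mul (-51840 : ℝ))).add ((hasDerivAt_pow 13 r).const_mul (-168480 : ℝ))).add ((hasDerivAt_pow 10 r).const_mul (-288000 : ℝ))).add ((hasDerivAt_pow 7 r).const_mul (-259200 : ℝ))).add ((hasDerivAt_pow 4 r).const_mul (-103680 : ℝ))).add ((hasDerivAt_pow 1 r).const_mul (-7680 : ℝ)))).div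
    ((((hasDerivAt_pow 3 r).sub_const (1 : ℝ)).pow 7).const_mul (16 : ℝ))
    (mul_ne_zero (by norm_num) (pow_ne_zero _ h1))
  exact myCongr h (by simp only [fdP, B5]; push_cast; simp only [Pi.add_apply, Pi.pow_apply, id_eq]; field_simp; ring)

lemma Bstep5 (r : ℝ) (h1 : r ^ 3 - 1 ≠ 0) (h2 : r ^ 3 + 2 ≠ 0) :
    HasDerivAt B5 (fdP r * B6 r) r := by
  have h := ((((((((((((((hasDerivAt_pow 36 r).const_mul (105 : ℝ)).add ((hasDerivAt_pow 30 r).const_mul (-1260 : ℝ))).add ((hasDerivAt_pow 27 r).const_mul (-15360 : ℝ))).add ((hasDerivAt_pow 24 r).const_mul (-443880 : ℝ))).add ((hasDerivAt_pow 21 r).const_mul (-3788640 : ℝ))).add ((hasDerivAt_pow 18 r).const_mul (-15624000 : ℝ))).add ((hasDerivAt_pow 15 r).const_mul (-36650880 : ℝ))).add ((hasDerivAt_pow 12 r).const_mul (-51045120 : ℝ))).add ((hasDerivAt_pow 9 r).const_mul (-40911360 : ℝ))).add ((hasDerivAt_pow 6 r).const_mul (-16588800 : ℝ))).add ((hasDerivAt_pow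 3 r).const_mul (-2304000 : ℝ))).add_const (-30720 : ℝ))).div
    ((((hasDerivAt_pow 3 r).sub_const (1 : ℝ)).pow 9).const_mul (32 : ℝ))
    (mul_ne_zero (by norm_num) (pow_ne_zero _ h1))
  exact myCongr h (by simp only [fdP, B6]; push_cast; simp only [Pi.add_apply, Pi.pow_apply, id_eq]; field_simp; ring)

lemma phi_deriv (a r : ℝ) (h2 : r ^ 3 + 2 ≠ 0) :
    HasDerivAt (fun x : ℝ => a ^ 2 * x / (2 * (x ^ 3 + 2)))
      (a ^ 2 * (1 - r ^ 3) / ((r ^ 3 + 2) ^ 2)) r := by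
  have h := ((hasDerivAt_id r).const_mul (a ^ 2)).div
    (((hasDerivAt_pow 3 r).add_const (2 : ℝ)).const_mul (2 : ℝ)) (mul_ne_zero two_ne_zero h2)
  exact myCongr h (by push_cast; simp only [Pi.add_apply, Pi.pow_apply, id_eq]; field_simp; ring)

lemma stepLemma {H φ G G₂ φd : ℝ → ℝ} {U : Set ℝ} (hU : IsOpen U) (k : ℕ)
    (hHd : ∀ r ∈ U, DifferentiableAt ℝ (iteratedDeriv k H) (φ r))
    (hφd : ∀ r ∈ U, HasDerivAt φ (φd r) r)
    (hφ0 : ∀ r ∈ U, φd r ≠ 0)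
    (hG : ∀ r ∈ U, HasDerivAt G (φd r * G₂ r) r)
    (heq : ∀ r ∈ U, iteratedDeriv k H (φ r) = G r) :
    ∀ r ∈ U, iteratedDeriv (k + 1) H (φ r) = G₂ r := by
  intro r hr
  have h1 : HasDerivAt (fun x => iteratedDeriv k H (φ x))
      (deriv (iteratedDeriv k H) (φ r) * φd r) r :=
    ((hHd r hr).hasDerivAt).comp r (hφd r hr)
  have h2 : HasDerivAt (fun x => iteratedDeriv k H (φ x)) (φd r * G₂ r) r := by
    apply (hG r hr).congr_of_eventuallyEq
    filter_upwards [hU.mem_nhds hr] with x hx using heq x hx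
  have h3 := h1.unique h2
  rw [iteratedDeriv_succ]
  exact mul_right_cancel₀ (hφ0 r hr) (h3.trans (mul_comm _ _))

/-- The parametrization `(t,H) = (12^(2/3) r/(2(r³+2)), 2·12^(1/3) r²/(r³+2))` yields a
solution of Noth's equation. -/
theorem noth_parametrization_recovered_translated
    (U V : Set ℝ) (hU : IsOpen U) (hUne : ∀ r ∈ U, r ^ 3 ≠ (-2 : ℝ)) (hV : IsOpen V)
    (φ ψ H : ℝ → ℝ)
    (hφ : ∀ r : ℝ, φ r = (12 : ℝ) ^ ((2 : ℝ) / 3) * r / (2 * (r ^ 3 + 2)))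
    (hψ : ∀ r : ℝ, ψ r = 2 * (12 : ℝ) ^ ((1 : ℝ) / 3) * r ^ 2 / (r ^ 3 + 2))
    (hφ' : ∀ r ∈ U, deriv φ r ≠ 0)
    (hVU : φ '' U ⊆ V)
    (hdiff : ∀ k < 6, ∀ t ∈ V, DifferentiableAt ℝ (iteratedDeriv k H) t)
    (hpar : ∀ r ∈ U, H (φ r) = ψ r) :
    ∀ t ∈ φ '' U, NothEqAt H t := by
  have hφfun : φ = fun x => aC ^ 2 * x / (2 * (x ^ 3 + 2)) := by
    funext x; rw [hφ x, aC_sq]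
  have hmem : ∀ r ∈ U, φ r ∈ V := fun r hr => hVU ⟨r, hr, rfl⟩
  have h2 : ∀ r ∈ U, r ^ 3 + 2 ≠ 0 := fun r hr h => hUne r hr (by linarith)
  have hφd : ∀ r ∈ U, HasDerivAt φ (aC ^ 2 * (1 - r ^ 3) / ((r ^ 3 + 2) ^ 2)) r := by
    intro r hr; rw [hφfun]; exact phi_deriv aC r (h2 r hr)
  have hφ0 : ∀ r ∈ U, aC ^ 2 * (1 - r ^ 3) / ((r ^ 3 + 2) ^ 2) ≠ 0 := by
    intro r hr; rw [← (hφd r hr).deriv]; exact hφ' r hr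
  have h1 : ∀ r ∈ U, r ^ 3 - 1 ≠ 0 := by
    intro r hr hcon
    apply hφ0 r hr
    rw [show (1 : ℝ) - r ^ 3 = -(r ^ 3 - 1) by ring, hcon]
    simp
  have hHd : ∀ k, k < 6 → ∀ r ∈ U, DifferentiableAt ℝ (iteratedDeriv k H) (φ r) :=
    fun k hk r hr => hdiff k hk (φ r) (hmem r hr)
  have L0 : ∀ r ∈ U, iteratedDeriv 0 H (φ r) = (2 * aC) * B0 r := by
    intro r hr
    rw [iteratedDeriv_zero, hpar r hr, hψ r, ← aC_def]
    simp only [B0]; ring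
  have hG0 : ∀ r ∈ U, HasDerivAt (fun x => (2 * aC) * B0 x)
      (aC ^ 2 * (1 - r ^ 3) / ((r ^ 3 + 2) ^ 2) * ((aC ^ 2 / 3) * B1 r)) r := by
    intro r hr
    refine myCongr ((Bstep0 r (h1 r hr) (h2 r hr)).const_mul (2 * aC)) ?_
    simp only [fdP]
    linear_combination (-(aC / 3) * (1 - r ^ 3) * B1 r / ((r ^ 3 + 2) ^ 2)) * aC_cube
  have L1 := stepLemma hU 0 (hHd 0 (by norm_num)) hφd hφ0 hG0 L0
  have hG1 : ∀ r ∈ U, HasDerivAt (fun x => (aC ^ 2 / 3) * B1 x)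
      (aC ^ 2 * (1 - r ^ 3) / ((r ^ 3 + 2) ^ 2) * ((2 / 3) * B2 r)) r := by
    intro r hr
    refine myCongr ((Bstep1 r (h1 r hr) (h2 r hr)).const_mul (aC ^ 2 / 3)) ?_
    simp only [fdP]; ring
  have L2 := stepLemma hU 1 (hHd 1 (by norm_num)) hφd hφ0 hG1 L1
  have hG2 : ∀ r ∈ U, HasDerivAt (fun x => (2 / 3 : ℝ) * B2 x)
      (aC ^ 2 * (1 - r ^ 3) / ((r ^ 3 + 2) ^ 2) * ((aC / 9) * B3 r)) r := by
    intro r hr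
    refine myCongr ((Bstep2 r (h1 r hr) (h2 r hr)).const_mul (2 / 3 : ℝ)) ?_
    simp only [fdP]
    linear_combination (-(1 / 9 : ℝ) * (1 - r ^ 3) * B3 r / ((r ^ 3 + 2) ^ 2)) * aC_cube
  have L3 := stepLemma hU 2 (hHd 2 (by norm_num)) hφd hφ0 hG2 L2
  have hG3 : ∀ r ∈ U, HasDerivAt (fun x => (aC / 9) * B3 x)
      (aC ^ 2 * (1 - r ^ 3) / ((r ^ 3 + 2) ^ 2) * ((aC ^ 2 / 54) * B4 r)) r := by
    intro r hr
    refine myCongr ((Bstep3 r (h1 r hr) (h2 r hr)).const_mul (aC / 9)) ?_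
    simp only [fdP]
    linear_combination (-(aC / 54) * (1 - r ^ 3) * B4 r / ((r ^ 3 + 2) ^ 2)) * aC_cube
  have L4 := stepLemma hU 3 (hHd 3 (by norm_num)) hφd hφ0 hG3 L3
  have hG4 : ∀ r ∈ U, HasDerivAt (fun x => (aC ^ 2 / 54) * B4 x)
      (aC ^ 2 * (1 - r ^ 3) / ((r ^ 3 + 2) ^ 2) * ((1 / 27 : ℝ) * B5 r)) r := by
    intro r hr
    refine myCongr ((Bstep4 r (h1 r hr) (h2 r hr)).const_mul (aC ^ 2 / 54)) ?_
    simp only [fdP]; ring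
  have L5 := stepLemma hU 4 (hHd 4 (by norm_num)) hφd hφ0 hG4 L4
  have hG5 : ∀ r ∈ U, HasDerivAt (fun x => (1 / 27 : ℝ) * B5 x)
      (aC ^ 2 * (1 - r ^ 3) / ((r ^ 3 + 2) ^ 2) * ((aC / 162) * B6 r)) r := by
    intro r hr
    refine myCongr ((Bstep5 r (h1 r hr) (h2 r hr)).const_mul (1 / 27 : ℝ)) ?_
    simp only [fdP]
    linear_combination (-(1 / 162 : ℝ) * (1 - r ^ 3) * B6 r / ((r ^ 3 + 2) ^ 2)) * aC_cube
  have L6 := stepLemma hU 5 (hHd 5 (by norm_num)) hφd hφ0 hG5 L5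
  intro t ht
  obtain ⟨r, hr, rfl⟩ := ht
  have hE : 10 * (B2 r) ^ 3 * (B6 r) - 70 * (B2 r) ^ 2 * (B3 r) * (B5 r)
      - 49 * (B2 r) ^ 2 * (B4 r) ^ 2 + 280 * (B2 r) * (B3 r) ^ 2 * (B4 r)
      - 175 * (B3 r) ^ 4 = 0 := by
    have hd1 := h1 r hr
    simp only [B2, B3, B4, B5, B6]
    field_simp
    ring
  unfold NothEqAt
  rw [L2 r hr, L3 r hr, L4 r hr, L5 r hr, L6 r hr]
  linear_combination (4 * aC / 2187) * hE +
    (aC * (-49 * (B2 r) ^ 2 * (B4 r) ^ 2 + 280 * (B2 r) * (B3 r) ^ 2 * (B4 r)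
      - 175 * (B3 r) ^ 4) / 6561) * aC_cube
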